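/- Let κ ≥ 0, λ be real with κ + |λ| > 0, p ≠ 0 real, h > 0 with |ph| < π, z = ph. Define ω̄ = -κp² - iλp, ω_L = -(4κ/h²)sin²(z/2) - i(λ/h)sin z, and ω_1 = ω_L - (8κ/(3h²))sin⁴(z/2) - i(2λ/(3h)) sin z sin²(z/2). Then |ω_1 - ω̄| < |ω_L - ω̄|. -/

import Mathlib

lemma aux_cos_lt_one {x : ℝ} (h1 : 0 < x) (h2 : x < Real.pi) : Real.cos x < 1 := by
  have hpi := Real.pi_pos
  refine lt_of_le_of_ne (Real.cos_le_one x) (fun h => ?_)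
  have := (Real.cos_eq_one_iff_of_lt_of_lt (x := x) (by linarith) (by linarith)).1 h
  linarith

lemma auxA {x : ℝ} (h1 : 0 < x) (h2 : x < Real.pi) :
    Real.sin x + Real.sin x ^ 3 / 6 < x := by
  set f : ℝ → ℝ := fun t => t - Real.sin t - Real.sin t ^ 3 / 6 with hf
  have hd : ∀ t : ℝ, HasDerivAt f (1 - Real.cos t - 3 * Real.sin t ^ 2 * Real.cos t / 6) t := by
    intro t
    have h := ((hasDerivAt_id t).sub (Real.hasDerivAt_sin t)).sub
      (((Real.hasDerivAt_sin t).pow 3).div_const 6)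
    exact h.congr_deriv (by norm_num)
  have hmono : StrictMonoOn f (Set.Icc 0 Real.pi) := by
    apply strictMonoOn_of_deriv_pos (convex_Icc _ _)
    · apply Continuous.continuousOn
      fun_prop
    · intro t ht
      rw [interior_Icc] at ht
      rw [(hd t).deriv]
      have hc1 : Real.cos t < 1 := aux_cos_lt_one ht.1 ht.2
      have hc2 : -1 ≤ Real.cos t := Real.neg_one_le_cos t
      have hs : Real.sin t ^ 2 = 1 - Real.cos t ^ 2 := Real.sin_sq t
      nlinarith [mul_pos (pow_pos (sub_pos.2 hc1) 2)
        (show (0:ℝ) < Real.cos t + 2 by linarith)]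
  have h0 : f 0 < f x := hmono (Set.left_mem_Icc.2 Real.pi_pos.le) ⟨h1.le, h2.le⟩ h1
  simp only [f, Real.sin_zero] at h0
  norm_num at h0
  linarith

lemma auxB {z : ℝ} (h1 : 0 < z) (h2 : z < Real.pi) :
    7 * Real.sin z - Real.sin z * Real.cos z < 6 * z := by
  set f : ℝ → ℝ := fun t => 6 * t - 7 * Real.sin t + Real.sin t * Real.cos t with hf
  have hd : ∀ t : ℝ, HasDerivAt f
      (6 - 7 * Real.cos t + (Real.cos t * Real.cos t + Real.sin t * (-Real.sin t))) t := by
    intro t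
    have h := (((hasDerivAt_id t).const_mul 6).sub ((Real.hasDerivAt_sin t).const_mul 7)).add
      ((Real.hasDerivAt_sin t).mul (Real.hasDerivAt_cos t))
    exact h.congr_deriv (by ring)
  have hmono : StrictMonoOn f (Set.Icc 0 Real.pi) := by
    apply strictMonoOn_of_deriv_pos (convex_Icc _ _)
    · apply Continuous.continuousOn
      fun_prop
    · intro t ht
      rw [interior_Icc] at ht
      rw [(hd t).deriv]
      have hc1 : Real.cos t < 1 := aux_cos_lt_one ht.1 ht.2
      have hc2 : -1 ≤ Real.cos t := Real.neg_one_le_cos t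
      have hs : Real.sin t ^ 2 = 1 - Real.cos t ^ 2 := Real.sin_sq t
      nlinarith [mul_pos (sub_pos.2 hc1) (show (0:ℝ) < 5 - 2 * Real.cos t by linarith)]
  have h0 : f 0 < f z := hmono (Set.left_mem_Icc.2 Real.pi_pos.le) ⟨h1.le, h2.le⟩ h1
  simp only [f, Real.sin_zero] at h0
  norm_num at h0
  linarith

lemma lemR {x : ℝ} (hx : x ≠ 0) (hx' : |x| < Real.pi / 2) :
    |x^2 - Real.sin x ^ 2 - 2/3 * Real.sin x ^ 4| < |x^2 - Real.sin x ^ 2| := by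
  have main : ∀ y : ℝ, 0 < y → y < Real.pi / 2 →
      |y^2 - Real.sin y ^ 2 - 2/3 * Real.sin y ^ 4| < |y^2 - Real.sin y ^ 2| := by
    intro y hy hy2
    have hpi := Real.pi_pos
    have hs : 0 < Real.sin y := Real.sin_pos_of_pos_of_lt_pi hy (by linarith)
    have hA := auxA hy (by linarith)
    have hmul : (Real.sin y + Real.sin y ^ 3 / 6) * (Real.sin y + Real.sin y ^ 3 / 6)
        < y * y := mul_self_lt_mul_self (by positivity) hA
    have key : Real.sin y ^ 2 + Real.sin y ^ 4 / 3 < y ^ 2 := by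
      nlinarith [pow_pos hs 6]
    have h4 : 0 < Real.sin y ^ 4 := pow_pos hs 4
    rw [abs_of_pos (show (0:ℝ) < y^2 - Real.sin y ^ 2 by nlinarith), abs_lt]
    constructor <;> nlinarith
  rcases hx.lt_or_gt with h | h
  · have := main (-x) (by linarith) (by rw [abs_of_neg h] at hx'; linarith)
    rw [Real.sin_neg] at this
    have e1 : (-x)^2 - (-Real.sin x)^2 - 2/3 * (-Real.sin x)^4
        = x^2 - Real.sin x ^ 2 - 2/3 * Real.sin x ^ 4 := by ring
    have e2 : (-x)^2 - (-Real.sin x)^2 = x^2 - Real.sin x ^ 2 := by ring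
    rwa [e1, e2] at this
  · exact main x h (by rwa [abs_of_pos h] at hx')

lemma lemI {z : ℝ} (hz : z ≠ 0) (hz' : |z| < Real.pi) :
    |z - Real.sin z - 2/3 * Real.sin z * Real.sin (z/2) ^ 2| < |z - Real.sin z| := by
  have main : ∀ y : ℝ, 0 < y → y < Real.pi →
      |y - Real.sin y - 2/3 * Real.sin y * Real.sin (y/2) ^ 2| < |y - Real.sin y| := by
    intro y hy hy2
    have hs : 0 < Real.sin y := Real.sin_pos_of_pos_of_lt_pi hy hy2
    have hc1 : Real.cos y < 1 := aux_cos_lt_one hy hy2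
    have hlt : Real.sin y < y := Real.sin_lt hy
    have hB := auxB hy hy2
    have hhalf : Real.sin (y/2) ^ 2 = 1/2 - Real.cos y / 2 := by
      rw [Real.sin_sq_eq_half_sub, show 2 * (y/2) = y by ring]
    rw [hhalf, abs_of_pos (show (0:ℝ) < y - Real.sin y by linarith), abs_lt]
    constructor
    · nlinarith
    · nlinarith [mul_pos hs (show (0:ℝ) < 1 - Real.cos y by linarith)]
  rcases hz.lt_or_gt with h | h
  · have := main (-z) (by linarith) (by rw [abs_of_neg h] at hz'; linarith)
    rw [show (-z)/2 = -(z/2) by ring, Real.sin_neg, Real.sin_neg] at this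
    have e1 : -z - -Real.sin z - 2/3 * -Real.sin z * (-Real.sin (z/2))^2
        = -(z - Real.sin z - 2/3 * Real.sin z * Real.sin (z/2) ^ 2) := by ring
    have e2 : -z - -Real.sin z = -(z - Real.sin z) := by ring
    rwa [e1, e2, abs_neg, abs_neg] at this
  · exact main z h (by rwa [abs_of_pos h] at hz')

theorem stmt_10 (kappa lam p h : ℝ) (hkappa : 0 ≤ kappa) (hpos : 0 < kappa + |lam|)
    (hp : p ≠ 0) (hh : 0 < h) (hz : |p*h| < Real.pi) :
    let z := p * h
    let omegaBar : ℂ := -((kappa * p^2 : ℝ) : ℂ) - Complex.I * ((lam * p : ℝ) : ℂ)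
    let omegaL : ℂ := -((4 * kappa / h^2 * Real.sin (z/2)^2 : ℝ) : ℂ)
      - Complex.I * ((lam / h * Real.sin z : ℝ) : ℂ)
    let omega1 : ℂ := omegaL - ((8 * kappa / (3 * h^2) * Real.sin (z/2)^4 : ℝ) : ℂ)
      - Complex.I * ((2 * lam / (3 * h) * Real.sin z * Real.sin (z/2)^2 : ℝ) : ℂ)
    ‖omega1 - omegaBar‖ < ‖omegaL - omegaBar‖ := by
  intro z omegaBar omegaL omega1
  have hzdef : z = p * h := rfl
  have hh0 : h ≠ 0 := hh.ne'
  have hz0 : z ≠ 0 := by rw [hzdef]; exact mul_ne_zero hp hh0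
  have hzabs : |z| < Real.pi := by rw [hzdef]; exact hz
  set aL : ℝ := (z/2)^2 - Real.sin (z/2) ^ 2 with haL
  set a1 : ℝ := (z/2)^2 - Real.sin (z/2) ^ 2 - 2/3 * Real.sin (z/2) ^ 4 with ha1
  set bL : ℝ := z - Real.sin z with hbL
  set b1 : ℝ := z - Real.sin z - 2/3 * Real.sin z * Real.sin (z/2) ^ 2 with hb1
  clear_value z aL a1 bL b1
  have hhc : (h:ℂ) ≠ 0 := Complex.ofReal_ne_zero.2 hh0
  have eL : omegaL - omegaBar = ((4*kappa/h^2 * aL : ℝ) : ℂ) + ((lam/h * bL : ℝ) : ℂ) * Complex.I := by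
    show (-((4 * kappa / h^2 * Real.sin (z/2)^2 : ℝ) : ℂ)
        - Complex.I * ((lam / h * Real.sin z : ℝ) : ℂ))
        - (-((kappa * p^2 : ℝ) : ℂ) - Complex.I * ((lam * p : ℝ) : ℂ)) = _
    rw [haL, hbL]
    apply Complex.ext <;>
      simp only [Complex.add_re, Complex.add_im, Complex.sub_re, Complex.sub_im,
        Complex.neg_re, Complex.neg_im, Complex.mul_re, Complex.mul_im,
        Complex.I_re, Complex.I_im, Complex.ofReal_re, Complex.ofReal_im] <;>
      rw [hzdef] <;> field_simp <;> ring
  have e1 : omega1 - omegaBar = ((4*kappa/h^2 * a1 : ℝ) : ℂ) + ((lam/h * b1 : ℝ) : ℂ) * Complex.I := by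
    show ((-((4 * kappa / h^2 * Real.sin (z/2)^2 : ℝ) : ℂ)
        - Complex.I * ((lam / h * Real.sin z : ℝ) : ℂ))
        - ((8 * kappa / (3 * h^2) * Real.sin (z/2)^4 : ℝ) : ℂ)
        - Complex.I * ((2 * lam / (3 * h) * Real.sin z * Real.sin (z/2)^2 : ℝ) : ℂ))
        - (-((kappa * p^2 : ℝ) : ℂ) - Complex.I * ((lam * p : ℝ) : ℂ)) = _
    rw [ha1, hb1]
    apply Complex.ext <;>
      simp only [Complex.add_re, Complex.add_im, Complex.sub_re, Complex.sub_im,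
        Complex.neg_re, Complex.neg_im, Complex.mul_re, Complex.mul_im,
        Complex.I_re, Complex.I_im, Complex.ofReal_re, Complex.ofReal_im] <;>
      rw [hzdef] <;> field_simp <;> ring
  rw [eL, e1, Complex.norm_add_mul_I, Complex.norm_add_mul_I]
  apply Real.sqrt_lt_sqrt (by positivity)
  rw [mul_pow, mul_pow, mul_pow, mul_pow]
  -- key inequalities
  have hx0 : z/2 ≠ 0 := div_ne_zero hz0 two_ne_zero
  have hx' : |z/2| < Real.pi / 2 := by
    rw [abs_div, abs_two]
    linarith
  have gR := lemR hx0 hx'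
  have gI := lemI hz0 hzabs
  have hA : a1^2 ≤ aL^2 := by
    rw [ha1, haL, ← sq_abs ((z/2)^2 - Real.sin (z/2) ^ 2 - 2/3 * Real.sin (z/2) ^ 4),
      ← sq_abs ((z/2)^2 - Real.sin (z/2) ^ 2)]
    exact pow_le_pow_left₀ (abs_nonneg _) gR.le 2
  have hB : b1^2 ≤ bL^2 := by
    rw [hb1, hbL, ← sq_abs (z - Real.sin z - 2/3 * Real.sin z * Real.sin (z/2) ^ 2),
      ← sq_abs (z - Real.sin z)]
    exact pow_le_pow_left₀ (abs_nonneg _) gI.le 2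
  rcases eq_or_ne lam 0 with hl | hl
  · have hk : 0 < kappa := by
      have h0 : |lam| = 0 := by simp [hl]
      linarith
    have hAs : a1^2 < aL^2 := by
      rw [ha1, haL, ← sq_abs ((z/2)^2 - Real.sin (z/2) ^ 2 - 2/3 * Real.sin (z/2) ^ 4),
        ← sq_abs ((z/2)^2 - Real.sin (z/2) ^ 2)]
      exact pow_lt_pow_left₀ gR (abs_nonneg _) two_ne_zero
    linarith [mul_lt_mul_of_pos_left hAs (show (0:ℝ) < (4*kappa/h^2)^2 from pow_pos (div_pos (by linarith) (by positivity)) 2),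
      mul_le_mul_of_nonneg_left hB (sq_nonneg (lam/h))]
  · have hBs : b1^2 < bL^2 := by
      rw [hb1, hbL, ← sq_abs (z - Real.sin z - 2/3 * Real.sin z * Real.sin (z/2) ^ 2),
        ← sq_abs (z - Real.sin z)]
      exact pow_lt_pow_left₀ gI (abs_nonneg _) two_ne_zero
    linarith [mul_le_mul_of_nonneg_left hA (sq_nonneg (4*kappa/h^2)),
      mul_lt_mul_of_pos_left hBs (lt_of_le_of_ne (sq_nonneg ((lam:ℝ)/h)) (Ne.symm (pow_ne_zero 2 (div_ne_zero hl hh0))))]
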